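/- arXiv:2006.14842 — 6 statements merged into one kernel-verified Lean document; each statement's English description precedes it below -/
import Mathlib

section
/- Assume the discounted algebraic Riccati equation setup with block upper-triangular transition matrix Ã and stacked input matrix B̃. If the symmetric block matrix P = fromBlocks(P_yy, P_yz, P_yzᵀ, P_zz) satisfies the discounted algebraic Riccati equation, then B̃ᵀ P B̃ = B_yuᵀ P_yy B_yu and the (y,y) block P_yy satisfies the reduced Riccati equation in the controllable variables alone: P_yy = Q_yy + β A_yyᵀ P_yy A_yy − β² A_yyᵀ P_yy B_yu (R_uu + β B_yuᵀ P_yy B_yu)⁻¹ B_yuᵀ P_yy A_yy. -/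
open Matrix

/-- If the symmetric block matrix `P = fromBlocks(P_yy, P_yz, P_yzᵀ, P_zz)`
satisfies the discounted algebraic Riccati equation with block upper-triangular `Ã` and
stacked `B̃`, then `B̃ᵀ P B̃ = B_yuᵀ P_yy B_yu` and `P_yy` satisfies the reduced Riccati
equation in the controllable variables alone. -/
theorem dare_yy_block_reduced_riccati
    {ny nz nu : ℕ}
    (Ayy : Matrix (Fin ny) (Fin ny) ℝ) (Ayz : Matrix (Fin ny) (Fin nz) ℝ)
    (Azz : Matrix (Fin nz) (Fin nz) ℝ) (Byu : Matrix (Fin ny) (Fin nu) ℝ)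
    (Qyy : Matrix (Fin ny) (Fin ny) ℝ) (Qyz : Matrix (Fin ny) (Fin nz) ℝ)
    (Qzz : Matrix (Fin nz) (Fin nz) ℝ) (Ruu : Matrix (Fin nu) (Fin nu) ℝ)
    (Pyy : Matrix (Fin ny) (Fin ny) ℝ) (Pyz : Matrix (Fin ny) (Fin nz) ℝ)
    (Pzz : Matrix (Fin nz) (Fin nz) ℝ)
    (β : ℝ) (hβ : 0 < β)
    (hQyy : Qyy.IsSymm) (hQzz : Qzz.IsSymm) (hRuu : Ruu.IsSymm)
    (hPyy : Pyy.IsSymm) (hPzz : Pzz.IsSymm)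
    (Atil : Matrix (Fin ny ⊕ Fin nz) (Fin ny ⊕ Fin nz) ℝ)
    (hAtil : Atil = fromBlocks Ayy Ayz 0 Azz)
    (Btil : Matrix (Fin ny ⊕ Fin nz) (Fin nu) ℝ)
    (hBtil : Btil = fromRows Byu 0)
    (Qtil : Matrix (Fin ny ⊕ Fin nz) (Fin ny ⊕ Fin nz) ℝ)
    (hQtil : Qtil = fromBlocks Qyy Qyz Qyzᵀ Qzz)
    (P : Matrix (Fin ny ⊕ Fin nz) (Fin ny ⊕ Fin nz) ℝ)
    (hP : P = fromBlocks Pyy Pyz Pyzᵀ Pzz)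
    (hinv : IsUnit (Ruu + β • (Btilᵀ * P * Btil)).det)
    (hdare : P = Qtil + β • (Atilᵀ * P * Atil)
      - (β ^ 2) • (Atilᵀ * P * Btil * (Ruu + β • (Btilᵀ * P * Btil))⁻¹
          * (Btilᵀ * P * Atil))) :
    Btilᵀ * P * Btil = Byuᵀ * Pyy * Byu
    ∧ Pyy = Qyy + β • (Ayyᵀ * Pyy * Ayy)
      - (β ^ 2) • (Ayyᵀ * Pyy * Byu * (Ruu + β • (Byuᵀ * Pyy * Byu))⁻¹
          * (Byuᵀ * Pyy * Ayy)) := by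
  subst hAtil hBtil hQtil hP
  have hB : Matrix.transpose (fromRows Byu (0 : Matrix (Fin nz) (Fin nu) ℝ)) * fromBlocks Pyy Pyz Pyzᵀ Pzz * fromRows Byu (0 : Matrix (Fin nz) (Fin nu) ℝ)
      = Byuᵀ * Pyy * Byu := by
    simp [transpose_fromRows, fromCols_mul_fromBlocks, fromCols_mul_fromRows]
  refine ⟨hB, ?_⟩
  rw [hB] at hdare
  simp only [transpose_fromRows, fromBlocks_transpose, transpose_zero,
    fromCols_mul_fromBlocks, fromBlocks_multiply, fromBlocks_mul_fromRows,
    fromRows_mul, mul_fromCols, fromRows_fromCols_eq_fromBlocks, fromCols_fromRows_eq_fromBlocks, fromRows_mul_fromCols, fromCols_mul_fromRows,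
    Matrix.mul_zero, Matrix.zero_mul, add_zero, zero_add,
    sub_eq_add_neg, ← fromBlocks_neg, ← fromBlocks_smul, ← fromBlocks_add] at hdare
  rw [sub_eq_add_neg]
  ext i j
  have h := congrFun (congrFun hdare (Sum.inl i)) (Sum.inl j)
  simpa using h
end

section
/- Assume the discounted algebraic Riccati equation setup with block upper-triangular transition matrix Ã and stacked input matrix B̃, and suppose the symmetric block matrix P = fromBlocks(P_yy, P_yz, P_yzᵀ, P_zz) satisfies the discounted algebraic Riccati equation. Define the optimal feedback matrix F_y = −(R_uu + β B_yuᵀ P_yy B_yu)⁻¹ β B_yuᵀ P_yy A_yy. Then the (y,z) block P_yz satisfies the Sylvester equation P_yz = Q_yz + β (A_yy + B_yu F_y)ᵀ P_yy A_yz + β (A_yy + B_yu F_y)ᵀ P_yz A_zz. -/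
open Matrix

set_option maxHeartbeats 1000000 in
/-- If `P` satisfies the discounted algebraic Riccati equation, then with
the optimal feedback `F_y = −(R_uu + β B_yuᵀ P_yy B_yu)⁻¹ β B_yuᵀ P_yy A_yy`, the block
`P_yz` satisfies the Sylvester equation
`P_yz = Q_yz + β (A_yy + B_yu F_y)ᵀ P_yy A_yz + β (A_yy + B_yu F_y)ᵀ P_yz A_zz`. -/
theorem dare_yz_block_sylvester
    {ny nz nu : ℕ}
    (Ayy : Matrix (Fin ny) (Fin ny) ℝ) (Ayz : Matrix (Fin ny) (Fin nz) ℝ)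
    (Azz : Matrix (Fin nz) (Fin nz) ℝ) (Byu : Matrix (Fin ny) (Fin nu) ℝ)
    (Qyy : Matrix (Fin ny) (Fin ny) ℝ) (Qyz : Matrix (Fin ny) (Fin nz) ℝ)
    (Qzz : Matrix (Fin nz) (Fin nz) ℝ) (Ruu : Matrix (Fin nu) (Fin nu) ℝ)
    (Pyy : Matrix (Fin ny) (Fin ny) ℝ) (Pyz : Matrix (Fin ny) (Fin nz) ℝ)
    (Pzz : Matrix (Fin nz) (Fin nz) ℝ)
    (β : ℝ) (hβ : 0 < β)
    (hQyy : Qyy.IsSymm) (hQzz : Qzz.IsSymm) (hRuu : Ruu.IsSymm)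
    (hPyy : Pyy.IsSymm) (hPzz : Pzz.IsSymm)
    (Atil : Matrix (Fin ny ⊕ Fin nz) (Fin ny ⊕ Fin nz) ℝ)
    (hAtil : Atil = fromBlocks Ayy Ayz 0 Azz)
    (Btil : Matrix (Fin ny ⊕ Fin nz) (Fin nu) ℝ)
    (hBtil : Btil = fromRows Byu 0)
    (Qtil : Matrix (Fin ny ⊕ Fin nz) (Fin ny ⊕ Fin nz) ℝ)
    (hQtil : Qtil = fromBlocks Qyy Qyz Qyzᵀ Qzz)
    (P : Matrix (Fin ny ⊕ Fin nz) (Fin ny ⊕ Fin nz) ℝ)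
    (hP : P = fromBlocks Pyy Pyz Pyzᵀ Pzz)
    (hinv : IsUnit (Ruu + β • (Btilᵀ * P * Btil)).det)
    (hdare : P = Qtil + β • (Atilᵀ * P * Atil)
      - (β ^ 2) • (Atilᵀ * P * Btil * (Ruu + β • (Btilᵀ * P * Btil))⁻¹
          * (Btilᵀ * P * Atil)))
    (Fy : Matrix (Fin nu) (Fin ny) ℝ)
    (hFy : Fy = -((Ruu + β • (Byuᵀ * Pyy * Byu))⁻¹ * (β • (Byuᵀ * Pyy * Ayy)))) :
    Pyz = Qyz + β • ((Ayy + Byu * Fy)ᵀ * Pyy * Ayz)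
      + β • ((Ayy + Byu * Fy)ᵀ * Pyz * Azz) := by
  subst hAtil hBtil hQtil hP hFy
  set M := Ruu + β • (Byuᵀ * Pyy * Byu) with hM
  have hBPB : (fromRows Byu (0 : Matrix (Fin nz) (Fin nu) ℝ))ᵀ * fromBlocks Pyy Pyz Pyzᵀ Pzz * (fromRows Byu 0 : Matrix (Fin ny ⊕ Fin nz) (Fin nu) ℝ) = Byuᵀ * Pyy * Byu := by
    simp [transpose_fromRows, fromCols_mul_fromBlocks, fromCols_mul_fromRows, Matrix.mul_assoc]
  rw [hBPB] at hdare hinv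
  -- expand blocks in hdare
  rw [sub_eq_add_neg] at hdare
  simp only [fromBlocks_transpose, transpose_fromRows, fromBlocks_multiply,
    fromCols_mul_fromBlocks, fromBlocks_mul_fromRows, fromCols_mul_fromRows,
    fromRows_mul, fromRows_mul_fromCols, mul_fromCols, fromCols_fromRows_eq_fromBlocks,
    Matrix.mul_zero, Matrix.zero_mul, add_zero, zero_add,
    transpose_zero, fromBlocks_smul, fromBlocks_neg, fromBlocks_add] at hdare
  have h12 := congrArg Matrix.toBlocks₁₂ hdare
  simp only [toBlocks_fromBlocks₁₂] at h12
  have hMt : Mᵀ = M := by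
    simp [hM, transpose_add, transpose_smul, transpose_mul, transpose_transpose,
      hRuu.eq, hPyy.eq, Matrix.mul_assoc]
  have hMi : M⁻¹ᵀ = M⁻¹ := by rw [Matrix.transpose_nonsing_inv, hMt]
  rw [← hM] at h12
  have hT : (Ayy + Byu * -(M⁻¹ * β • (Byuᵀ * Pyy * Ayy)))ᵀ
      = Ayyᵀ - β • (Ayyᵀ * Pyy * Byu * M⁻¹ * Byuᵀ) := by
    rw [transpose_add, Matrix.mul_neg, transpose_neg, transpose_mul, transpose_mul,
      transpose_smul, transpose_mul, transpose_mul, transpose_transpose, hMi, hPyy.eq,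
      sub_eq_add_neg]
    simp only [Matrix.smul_mul, Matrix.mul_assoc]
  conv_lhs => rw [h12]
  rw [hT]
  simp only [Matrix.sub_mul, Matrix.add_mul, Matrix.neg_mul, Matrix.mul_add, Matrix.smul_mul,
    smul_sub, smul_add, smul_smul, pow_two, Matrix.mul_assoc, sub_eq_add_neg, smul_neg, neg_add]
  abel
end

section
/- Assume the discounted algebraic Riccati equation setup with block upper-triangular transition matrix Ã and stacked input matrix B̃, let P = fromBlocks(P_yy, P_yz, P_yzᵀ, P_zz) be symmetric, and assume R_uu + β B_yuᵀ P_yy B_yu is invertible. Define F_y = −(R_uu + β B_yuᵀ P_yy B_yu)⁻¹ β B_yuᵀ P_yy A_yy. Then P satisfies the discounted algebraic Riccati equation if and only if the following three block equations hold simultaneously: (i) P_yy = Q_yy + β A_yyᵀ P_yy A_yy − β² A_yyᵀ P_yy B_yu (R_uu + β B_yuᵀ P_yy B_yu)⁻¹ B_yuᵀ P_yy A_yy; (ii) P_yz = Q_yz + β (A_yy + B_yu F_y)ᵀ P_yy A_yz + β (A_yy + B_yu F_y)ᵀ P_yz A_zz; (iii) P_zz = Q_zz + β [A_yzᵀ (P_yy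 A_yz + P_yz A_zz) + A_zzᵀ (P_yzᵀ A_yz + P_zz A_zz)] − β² (A_yzᵀ P_yy B_yu + A_zzᵀ P_yzᵀ B_yu) (R_uu + β B_yuᵀ P_yy B_yu)⁻¹ B_yuᵀ (P_yy A_yz + P_yz A_zz). -/
open Matrix

/-- With `P = fromBlocks(P_yy, P_yz, P_yzᵀ, P_zz)` symmetric and
`R_uu + β B_yuᵀ P_yy B_yu` invertible, `P` satisfies the discounted algebraic Riccati
equation iff the three block equations (reduced Riccati for `P_yy`, Sylvester for
`P_yz`, and the `P_zz` equation) hold simultaneously. -/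
theorem dare_iff_three_block_equations
    {ny nz nu : ℕ}
    (Ayy : Matrix (Fin ny) (Fin ny) ℝ) (Ayz : Matrix (Fin ny) (Fin nz) ℝ)
    (Azz : Matrix (Fin nz) (Fin nz) ℝ) (Byu : Matrix (Fin ny) (Fin nu) ℝ)
    (Qyy : Matrix (Fin ny) (Fin ny) ℝ) (Qyz : Matrix (Fin ny) (Fin nz) ℝ)
    (Qzz : Matrix (Fin nz) (Fin nz) ℝ) (Ruu : Matrix (Fin nu) (Fin nu) ℝ)
    (Pyy : Matrix (Fin ny) (Fin ny) ℝ) (Pyz : Matrix (Fin ny) (Fin nz) ℝ)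
    (Pzz : Matrix (Fin nz) (Fin nz) ℝ)
    (β : ℝ) (hβ : 0 < β)
    (hQyy : Qyy.IsSymm) (hQzz : Qzz.IsSymm) (hRuu : Ruu.IsSymm)
    (hPyy : Pyy.IsSymm) (hPzz : Pzz.IsSymm)
    (Atil : Matrix (Fin ny ⊕ Fin nz) (Fin ny ⊕ Fin nz) ℝ)
    (hAtil : Atil = fromBlocks Ayy Ayz 0 Azz)
    (Btil : Matrix (Fin ny ⊕ Fin nz) (Fin nu) ℝ)
    (hBtil : Btil = fromRows Byu 0)
    (Qtil : Matrix (Fin ny ⊕ Fin nz) (Fin ny ⊕ Fin nz) ℝ)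
    (hQtil : Qtil = fromBlocks Qyy Qyz Qyzᵀ Qzz)
    (P : Matrix (Fin ny ⊕ Fin nz) (Fin ny ⊕ Fin nz) ℝ)
    (hP : P = fromBlocks Pyy Pyz Pyzᵀ Pzz)
    (hinv : IsUnit (Ruu + β • (Byuᵀ * Pyy * Byu)).det)
    (Fy : Matrix (Fin nu) (Fin ny) ℝ)
    (hFy : Fy = -((Ruu + β • (Byuᵀ * Pyy * Byu))⁻¹ * (β • (Byuᵀ * Pyy * Ayy)))) :
    (P = Qtil + β • (Atilᵀ * P * Atil)
        - (β ^ 2) • (Atilᵀ * P * Btil * (Ruu + β • (Btilᵀ * P * Btil))⁻¹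
            * (Btilᵀ * P * Atil)))
    ↔ (Pyy = Qyy + β • (Ayyᵀ * Pyy * Ayy)
          - (β ^ 2) • (Ayyᵀ * Pyy * Byu * (Ruu + β • (Byuᵀ * Pyy * Byu))⁻¹
              * (Byuᵀ * Pyy * Ayy))
      ∧ Pyz = Qyz + β • ((Ayy + Byu * Fy)ᵀ * Pyy * Ayz)
          + β • ((Ayy + Byu * Fy)ᵀ * Pyz * Azz)
      ∧ Pzz = Qzz
          + β • (Ayzᵀ * (Pyy * Ayz + Pyz * Azz) + Azzᵀ * (Pyzᵀ * Ayz + Pzz * Azz))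
          - (β ^ 2) • ((Ayzᵀ * Pyy * Byu + Azzᵀ * Pyzᵀ * Byu)
              * (Ruu + β • (Byuᵀ * Pyy * Byu))⁻¹
              * (Byuᵀ * (Pyy * Ayz + Pyz * Azz)))) := by

  subst hAtil hBtil hQtil hP hFy
  set G : Matrix (Fin nu) (Fin nu) ℝ := Ruu + β • (Byuᵀ * Pyy * Byu) with hG
  have hGsymm : Gᵀ = G := by
    rw [hG]; simp [Matrix.transpose_add, Matrix.transpose_smul, Matrix.transpose_mul,
      Matrix.transpose_transpose, hRuu.eq, hPyy.eq, Matrix.mul_assoc]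
  have hGt : (G⁻¹)ᵀ = G⁻¹ := by
    rw [Matrix.transpose_nonsing_inv, hGsymm]
  have e2 : Qyz + β • ((Ayy + Byu * -(G⁻¹ * β • (Byuᵀ * Pyy * Ayy)))ᵀ * Pyy * Ayz) +
        β • ((Ayy + Byu * -(G⁻¹ * β • (Byuᵀ * Pyy * Ayy)))ᵀ * Pyz * Azz)
      = Qyz + β • (Ayyᵀ * Pyy * Ayz + Ayyᵀ * Pyz * Azz) +
        -(β ^ 2 • (Ayyᵀ * Pyy * Byu * G⁻¹ * (Byuᵀ * Pyy * Ayz + Byuᵀ * Pyz * Azz))) := by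
    simp only [Matrix.transpose_add, Matrix.transpose_neg, Matrix.transpose_mul,
      Matrix.transpose_smul, Matrix.transpose_transpose, hGt, hPyy.eq,
      Matrix.add_mul, Matrix.mul_add, Matrix.neg_mul, Matrix.mul_neg,
      Matrix.smul_mul, Matrix.mul_smul, smul_smul, smul_add, smul_neg, neg_add,
      pow_two, Matrix.mul_assoc]
    try abel
  have e3 : Qzz + β • (Ayzᵀ * (Pyy * Ayz + Pyz * Azz) + Azzᵀ * (Pyzᵀ * Ayz + Pzz * Azz)) +
        -(β ^ 2 • ((Ayzᵀ * Pyy * Byu + Azzᵀ * Pyzᵀ * Byu) * G⁻¹ * (Byuᵀ * (Pyy * Ayz + Pyz * Azz))))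
      = Qzz + β • ((Ayzᵀ * Pyy + Azzᵀ * Pyzᵀ) * Ayz + (Ayzᵀ * Pyz + Azzᵀ * Pzz) * Azz) +
        -(β ^ 2 • ((Ayzᵀ * Pyy + Azzᵀ * Pyzᵀ) * Byu * G⁻¹ * (Byuᵀ * Pyy * Ayz + Byuᵀ * Pyz * Azz))) := by
    simp only [Matrix.add_mul, Matrix.mul_add, smul_add, Matrix.mul_assoc]
    try abel
  have e4 : (Qyz + β • (Ayyᵀ * Pyy * Ayz + Ayyᵀ * Pyz * Azz) +
        -(β ^ 2 • (Ayyᵀ * Pyy * Byu * G⁻¹ * (Byuᵀ * Pyy * Ayz + Byuᵀ * Pyz * Azz))))ᵀ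
      = Qyzᵀ + β • ((Ayzᵀ * Pyy + Azzᵀ * Pyzᵀ) * Ayy) +
        -(β ^ 2 • ((Ayzᵀ * Pyy + Azzᵀ * Pyzᵀ) * Byu * G⁻¹ * (Byuᵀ * Pyy * Ayy))) := by
    simp only [Matrix.transpose_add, Matrix.transpose_neg, Matrix.transpose_mul,
      Matrix.transpose_smul, Matrix.transpose_transpose, hGt, hPyy.eq,
      Matrix.add_mul, Matrix.mul_add, smul_add, Matrix.mul_assoc]
    try abel
  simp only [transpose_fromRows, fromBlocks_transpose, transpose_zero,
    fromCols_mul_fromBlocks, fromCols_mul_fromRows, fromBlocks_multiply,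
    fromBlocks_mul_fromRows, fromRows_mul_fromCols, fromBlocks_smul,
    fromBlocks_add, fromBlocks_neg, sub_eq_add_neg,
    Matrix.zero_mul, Matrix.mul_zero, add_zero, zero_add,
    fromRows_mul, mul_fromCols, fromCols_fromRows_eq_fromBlocks]
  rw [fromBlocks_inj, ← hG]
  constructor
  · rintro ⟨h1, h2, h3, h4⟩
    exact ⟨h1, h2.trans e2.symm, h4.trans e3.symm⟩
  · rintro ⟨h1, h2, h3⟩
    refine ⟨h1, h2.trans e2, ?_, h3.trans e3⟩
    have := congrArg Matrix.transpose (h2.trans e2)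
    rwa [e4] at this
end

section
/- Consider the Hamiltonian pencil (N, L) of the Stackelberg problem with non-controllable shocks: L = [[I, 0, −β B_yu R_uu⁻¹ B_yuᵀ, 0], [0, I, 0, 0], [0, 0, β A_yyᵀ, 0], [0, 0, β A_yzᵀ, β A_zzᵀ]] and N = [[A_yy, A_yz, 0, 0], [0, A_zz, 0, 0], [−Q_yy, −Q_yz, I, 0], [−Q_yzᵀ, −Q_zz, 0, I]]. If ρ is an eigenvalue of the shock transition matrix A_zz (i.e., det(A_zz − ρ I) = 0), then ρ is a generalized eigenvalue of the pencil: det(N − ρ L) = 0. -/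
open Matrix

/-- For the Hamiltonian pencil `(N, L)` of the Stackelberg problem with
non-controllable shocks, every eigenvalue `ρ` of the shock transition matrix `A_zz` is
a generalized eigenvalue of the pencil: `det(N − ρ L) = 0`. -/
theorem pencil_eigenvalue_of_shock_matrix
    {ny nz nu : ℕ}
    (Ayy : Matrix (Fin ny) (Fin ny) ℝ) (Ayz : Matrix (Fin ny) (Fin nz) ℝ)
    (Azz : Matrix (Fin nz) (Fin nz) ℝ) (Byu : Matrix (Fin ny) (Fin nu) ℝ)
    (Qyy : Matrix (Fin ny) (Fin ny) ℝ) (Qyz : Matrix (Fin ny) (Fin nz) ℝ)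
    (Qzz : Matrix (Fin nz) (Fin nz) ℝ) (Ruu : Matrix (Fin nu) (Fin nu) ℝ)
    (hQyy : Qyy.IsSymm) (hQzz : Qzz.IsSymm) (hRuu : Ruu.IsSymm)
    (hRinv : IsUnit Ruu.det)
    (β : ℝ)
    (L N : Matrix ((Fin ny ⊕ Fin nz) ⊕ (Fin ny ⊕ Fin nz))
      ((Fin ny ⊕ Fin nz) ⊕ (Fin ny ⊕ Fin nz)) ℝ)
    (hL : L = fromBlocks (fromBlocks 1 0 0 1)
      (fromBlocks (-(β • (Byu * Ruu⁻¹ * Byuᵀ))) 0 0 0)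
      0
      (fromBlocks (β • Ayyᵀ) 0 (β • Ayzᵀ) (β • Azzᵀ)))
    (hN : N = fromBlocks (fromBlocks Ayy Ayz 0 Azz) 0
      (fromBlocks (-Qyy) (-Qyz) (-Qyzᵀ) (-Qzz)) 1)
    (ρ : ℝ) (hρ : (Azz - ρ • 1).det = 0) :
    (N - ρ • L).det = 0 := by
  obtain ⟨v, hv, hvmul⟩ := Matrix.exists_vecMul_eq_zero_iff.2 hρ
  rw [← Matrix.exists_vecMul_eq_zero_iff]
  refine ⟨Sum.elim (Sum.elim 0 v) 0, ?_, ?_⟩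
  · intro h
    apply hv
    ext i
    exact congrFun h (Sum.inl (Sum.inr i))
  · have key : N - ρ • L = fromBlocks
        (fromBlocks (Ayy - ρ • 1) Ayz 0 (Azz - ρ • 1))
        (fromBlocks (ρ • (β • (Byu * Ruu⁻¹ * Byuᵀ))) 0 0 0)
        (fromBlocks (-Qyy) (-Qyz) (-Qyzᵀ) (-Qzz))
        (fromBlocks (1 - ρ • (β • Ayyᵀ)) 0 (-(ρ • (β • Ayzᵀ))) (1 - ρ • (β • Azzᵀ))) := by
      subst hL hN
      simp only [Matrix.fromBlocks_smul, smul_zero, smul_neg, sub_eq_add_neg,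
        Matrix.fromBlocks_neg, Matrix.fromBlocks_add, neg_zero, add_zero, zero_add, neg_neg]
      congr 1
      rw [← Matrix.fromBlocks_one, Matrix.fromBlocks_add]
      simp
    rw [key, Matrix.vecMul_fromBlocks]
    have h1 : v ᵥ* (Azz - ρ • 1) = 0 := hvmul
    ext (i | i) <;>
      simp [Matrix.vecMul_fromBlocks, Sum.elim_comp_inl, Sum.elim_comp_inr, h1]
end

section
/- Consider the Hamiltonian pencil (N, L) of the Stackelberg problem with non-controllable shocks: L = [[I, 0, −β B_yu R_uu⁻¹ B_yuᵀ, 0], [0, I, 0, 0], [0, 0, β A_yyᵀ, 0], [0, 0, β A_yzᵀ, β A_zzᵀ]] and N = [[A_yy, A_yz, 0, 0], [0, A_zz, 0, 0], [−Q_yy, −Q_yz, I, 0], [−Q_yzᵀ, −Q_zz, 0, I]]. Let β ≠ 0 and let ρ ≠ 0 be an eigenvalue of the shock transition matrix A_zz. Then the mirror value 1/(βρ) is a generalized eigenvalue of the pencil: det(N − (1/(βρ)) L) = 0. (These mirror roots, produced by including the Lagrange multiplier ν on the non-controllable dynamics, are all missing in Anderson et al. (1996).) -/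
open Matrix

/-- For the Hamiltonian pencil `(N, L)` of the Stackelberg problem with
non-controllable shocks, with `β ≠ 0` and `ρ ≠ 0` an eigenvalue of the shock transition
matrix `A_zz`, the mirror value `1/(βρ)` is a generalized eigenvalue of the pencil:
`det(N − (1/(βρ)) L) = 0`. These mirror roots, produced by including the Lagrange
multiplier `ν` on the non-controllable dynamics, are all missing in
Anderson et al. (1996). -/
theorem pencil_mirror_eigenvalue_of_shock_matrix
    {ny nz nu : ℕ}
    (Ayy : Matrix (Fin ny) (Fin ny) ℝ) (Ayz : Matrix (Fin ny) (Fin nz) ℝ)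
    (Azz : Matrix (Fin nz) (Fin nz) ℝ) (Byu : Matrix (Fin ny) (Fin nu) ℝ)
    (Qyy : Matrix (Fin ny) (Fin ny) ℝ) (Qyz : Matrix (Fin ny) (Fin nz) ℝ)
    (Qzz : Matrix (Fin nz) (Fin nz) ℝ) (Ruu : Matrix (Fin nu) (Fin nu) ℝ)
    (hQyy : Qyy.IsSymm) (hQzz : Qzz.IsSymm) (hRuu : Ruu.IsSymm)
    (hRinv : IsUnit Ruu.det)
    (β : ℝ) (hβ : β ≠ 0)
    (L N : Matrix ((Fin ny ⊕ Fin nz) ⊕ (Fin ny ⊕ Fin nz))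
      ((Fin ny ⊕ Fin nz) ⊕ (Fin ny ⊕ Fin nz)) ℝ)
    (hL : L = fromBlocks (fromBlocks 1 0 0 1)
      (fromBlocks (-(β • (Byu * Ruu⁻¹ * Byuᵀ))) 0 0 0)
      0
      (fromBlocks (β • Ayyᵀ) 0 (β • Ayzᵀ) (β • Azzᵀ)))
    (hN : N = fromBlocks (fromBlocks Ayy Ayz 0 Azz) 0
      (fromBlocks (-Qyy) (-Qyz) (-Qyzᵀ) (-Qzz)) 1)
    (ρ : ℝ) (hρ0 : ρ ≠ 0) (hρ : (Azz - ρ • 1).det = 0) :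
    (N - (1 / (β * ρ)) • L).det = 0 := by
  have hdetT : (Azzᵀ - ρ • 1).det = 0 := by
    have h : (Azz - ρ • (1 : Matrix (Fin nz) (Fin nz) ℝ))ᵀ = Azzᵀ - ρ • 1 := by
      simp [transpose_sub, transpose_smul]
    rw [← h, Matrix.det_transpose]
    exact hρ
  obtain ⟨w, hw0, hw⟩ := (Matrix.exists_mulVec_eq_zero_iff).2 hdetT
  have hAzz : Azzᵀ *ᵥ w = ρ • w := by
    have h := hw
    rw [sub_mulVec, smul_mulVec, one_mulVec, sub_eq_zero] at h
    exact h
  rw [← Matrix.exists_mulVec_eq_zero_iff]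
  refine ⟨Sum.elim 0 (Sum.elim 0 w), ?_, ?_⟩
  · intro h
    apply hw0
    funext i
    exact congrFun h (Sum.inr (Sum.inr i))
  · subst hL hN
    rw [sub_mulVec, smul_mulVec]
    simp only [Matrix.fromBlocks_mulVec, Matrix.mulVec_zero, Matrix.zero_mulVec,
      Matrix.one_mulVec, smul_mulVec, hAzz, add_zero, zero_add,
      Sum.elim_comp_inl, Sum.elim_comp_inr]
    funext i
    rcases i with (i | i) | (i | i) <;>
      simp [Pi.sub_apply, Pi.smul_apply, smul_eq_mul] <;>
      field_simp <;> ring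
end

section
/- Let A be a real n×n matrix, B a real n×m matrix, Q a symmetric n×n matrix, R a symmetric invertible m×m matrix, and β ≠ 0 a scalar. Define the 2n×2n matrices L = [[I, −β B R⁻¹ Bᵀ], [0, β Aᵀ]], N = [[A, 0], [−Q, I]], and the standard symplectic form J = [[0, I], [−I, 0]]. Then N J Nᵀ = β⁻¹ L J Lᵀ. Consequently, if L is invertible, the Hamiltonian matrix H = L⁻¹ N satisfies H J Hᵀ = β⁻¹ J; in particular for β = 1, H is a symplectic matrix. -/
open Matrix

/-- For the matrices `L = [[I, −β B R⁻¹ Bᵀ], [0, β Aᵀ]]`,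
`N = [[A, 0], [−Q, I]]` and the standard symplectic form `J = [[0, I], [−I, 0]]`,
one has `N J Nᵀ = β⁻¹ L J Lᵀ`; consequently, if `L` is invertible, the Hamiltonian
matrix `H = L⁻¹ N` satisfies `H J Hᵀ = β⁻¹ J`, and in particular for `β = 1`, `H` is
a symplectic matrix. -/
theorem hamiltonian_pencil_symplectic
    {n m : ℕ}
    (A : Matrix (Fin n) (Fin n) ℝ) (B : Matrix (Fin n) (Fin m) ℝ)
    (Q : Matrix (Fin n) (Fin n) ℝ) (R : Matrix (Fin m) (Fin m) ℝ)
    (hQ : Q.IsSymm) (hR : R.IsSymm) (hRinv : IsUnit R.det)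
    (β : ℝ) (hβ : β ≠ 0)
    (L N J : Matrix (Fin n ⊕ Fin n) (Fin n ⊕ Fin n) ℝ)
    (hL : L = fromBlocks 1 (-(β • (B * R⁻¹ * Bᵀ))) 0 (β • Aᵀ))
    (hN : N = fromBlocks A 0 (-Q) 1)
    (hJ : J = fromBlocks 0 1 (-1) 0) :
    N * J * Nᵀ = β⁻¹ • (L * J * Lᵀ)
    ∧ (IsUnit L.det → (L⁻¹ * N) * J * (L⁻¹ * N)ᵀ = β⁻¹ • J)
    ∧ (β = 1 → IsUnit L.det → (L⁻¹ * N) * J * (L⁻¹ * N)ᵀ = J) := by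
  have hS : (B * R⁻¹ * Bᵀ)ᵀ = B * R⁻¹ * Bᵀ := by
    simp [transpose_mul, transpose_nonsing_inv, hR.eq, Matrix.mul_assoc]
  have key : N * J * Nᵀ = β⁻¹ • (L * J * Lᵀ) := by
    subst hL hN hJ
    simp [fromBlocks_transpose, fromBlocks_multiply, Matrix.fromBlocks_smul, hS, hQ.eq,
      smul_smul, inv_mul_cancel₀ hβ, Matrix.mul_smul, Matrix.smul_mul, transpose_smul]
  have h2 : IsUnit L.det → (L⁻¹ * N) * J * (L⁻¹ * N)ᵀ = β⁻¹ • J := by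
    intro hLu
    have hLtu : IsUnit Lᵀ.det := by rwa [det_transpose]
    calc (L⁻¹ * N) * J * (L⁻¹ * N)ᵀ
        = L⁻¹ * (N * J * Nᵀ) * (L⁻¹)ᵀ := by
          rw [transpose_mul]; noncomm_ring
      _ = β⁻¹ • (L⁻¹ * (L * J * Lᵀ) * (Lᵀ)⁻¹) := by
          rw [key, transpose_nonsing_inv]
          simp [Matrix.mul_smul, Matrix.smul_mul]
      _ = β⁻¹ • J := by
          rw [show L⁻¹ * (L * J * Lᵀ) * (Lᵀ)⁻¹ = (L⁻¹ * L) * J * (Lᵀ * (Lᵀ)⁻¹) by noncomm_ring,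
            nonsing_inv_mul L hLu, mul_nonsing_inv Lᵀ hLtu, one_mul, mul_one]
  exact ⟨key, h2, fun hβ1 hLu => by rw [h2 hLu, hβ1]; simp⟩
end
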